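/- Let K = conv{0, e_1, ..., e_n} and L = conv{0, λ_1 e_1, ..., λ_n e_n} in ℝ^n with λ_i > 0. Then Vol(conv(K ∪ (-L))) = (1/n!) · ∏_{i=1}^n (1 + λ_i). -/

import Mathlib

open MeasureTheory Finset
open scoped ENNReal Pointwise

private lemma vol_piece (n : ℕ) (l : Fin n → ℝ) (hl : ∀ i, 0 < l i) (S : Finset (Fin n)) :
    volume ({x : Fin n → ℝ | ∑ i, max (x i) (-(x i) / l i) ≤ 1} ∩
        {x : Fin n → ℝ | ∀ i, (i ∈ S ↔ 0 ≤ x i)}) =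
      ENNReal.ofReal (∏ i ∈ Sᶜ, l i) *
        volume {y : Fin n → ℝ | (∀ i, 0 ≤ y i) ∧ ∑ i, y i ≤ 1} := by
  classical
  set d : Fin n → ℝ := fun i => if i ∈ S then 1 else -l i with hd
  set D : (Fin n → ℝ) →ₗ[ℝ] (Fin n → ℝ) := Matrix.toLin' (Matrix.diagonal d) with hDdef
  have hD : ∀ (y : Fin n → ℝ) (i : Fin n), D y i = d i * y i := by
    intro y i
    simp [hDdef, Matrix.toLin'_apply, Matrix.mulVec_diagonal]
  have hdet : LinearMap.det D = ∏ i, d i := by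
    rw [hDdef, LinearMap.det_toLin', Matrix.det_diagonal]
  set T : Set (Fin n → ℝ) :=
    {y | (∀ i, (i ∈ S → 0 ≤ y i) ∧ (i ∉ S → 0 < y i)) ∧ ∑ i, y i ≤ 1} with hT
  have himg : ({x : Fin n → ℝ | ∑ i, max (x i) (-(x i) / l i) ≤ 1} ∩
      {x : Fin n → ℝ | ∀ i, (i ∈ S ↔ 0 ≤ x i)}) = D '' T := by
    ext x
    constructor
    · rintro ⟨hx1, hx2⟩
      refine ⟨fun i => if i ∈ S then x i else -(x i) / l i, ⟨fun i => ?_, ?_⟩, ?_⟩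
      · constructor
        · intro hi; simp only [if_pos hi]; exact (hx2 i).mp hi
        · intro hi; simp only [if_neg hi]
          have hxi : x i < 0 := lt_of_not_ge fun h => hi ((hx2 i).mpr h)
          exact div_pos (neg_pos.mpr hxi) (hl i)
      · refine le_trans (le_of_eq ?_) hx1
        refine Finset.sum_congr rfl fun i _ => ?_
        by_cases hi : i ∈ S
        · have hxi : 0 ≤ x i := (hx2 i).mp hi
          have : -(x i) / l i ≤ x i :=
            le_trans (div_nonpos_of_nonpos_of_nonneg (neg_nonpos.mpr hxi) (hl i).le) hxi
          simp [hi, max_eq_left this]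
        · have hxi : x i < 0 := lt_of_not_ge fun h => hi ((hx2 i).mpr h)
          have : x i ≤ -(x i) / l i :=
            le_trans hxi.le (div_nonneg (neg_nonneg.mpr hxi.le) (hl i).le)
          simp [hi, max_eq_right this]
      · funext i
        rw [hD]
        by_cases hi : i ∈ S
        · simp [hd, hi]
        · have : l i ≠ 0 := (hl i).ne'
          simp only [hd, if_neg hi]
          field_simp
    · rintro ⟨y, ⟨hy1, hy2⟩, rfl⟩
      have key : ∀ i, max (D y i) (-(D y i) / l i) = y i := by
        intro i
        by_cases hi : i ∈ S
        · have hDyi : D y i = y i := by rw [hD]; simp [hd, hi]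
          have h0 : 0 ≤ y i := (hy1 i).1 hi
          have : -(y i) / l i ≤ y i :=
            le_trans (div_nonpos_of_nonpos_of_nonneg (neg_nonpos.mpr h0) (hl i).le) h0
          rw [hDyi]; exact max_eq_left this
        · have hDyi : D y i = -l i * y i := by rw [hD]; simp [hd, hi]
          have h0 : 0 < y i := (hy1 i).2 hi
          have hne : l i ≠ 0 := (hl i).ne'
          have heq : -(-l i * y i) / l i = y i := by field_simp
          have hle : -l i * y i ≤ y i := by nlinarith [hl i]
          rw [hDyi, heq]
          exact max_eq_right hle
      constructor
      · simpa only [Set.mem_setOf_eq, key] using hy2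
      · intro i
        by_cases hi : i ∈ S
        · have hDyi : D y i = y i := by rw [hD]; simp [hd, hi]
          rw [hDyi]
          exact iff_of_true hi ((hy1 i).1 hi)
        · have hDyi : D y i = -l i * y i := by rw [hD]; simp [hd, hi]
          have h0 : 0 < y i := (hy1 i).2 hi
          have : -l i * y i < 0 := mul_neg_of_neg_of_pos (neg_neg_of_pos (hl i)) h0
          rw [hDyi]
          exact iff_of_false hi (not_le.mpr this)
  have habs : |∏ i, d i| = ∏ i ∈ Sᶜ, l i := by
    rw [Finset.abs_prod]
    rw [← Finset.prod_filter_mul_prod_filter_not Finset.univ (· ∈ S) fun i => |d i|]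
    have h1 : ∀ i ∈ Finset.univ.filter (· ∈ S), |d i| = 1 := by
      intro i hi
      simp only [Finset.mem_filter] at hi
      simp [hd, hi.2]
    have h2 : ∀ i ∈ Finset.univ.filter (¬ · ∈ S), |d i| = l i := by
      intro i hi
      simp only [Finset.mem_filter] at hi
      simp [hd, hi.2, abs_of_pos (hl i)]
    rw [Finset.prod_congr rfl h1, Finset.prod_congr rfl h2, Finset.prod_const_one, one_mul]
    congr 1
    ext i
    simp
  have hTvol : volume T = volume {y : Fin n → ℝ | (∀ i, 0 ≤ y i) ∧ ∑ i, y i ≤ 1} := by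
    have hsub : T ⊆ {y : Fin n → ℝ | (∀ i, 0 ≤ y i) ∧ ∑ i, y i ≤ 1} := by
      rintro y ⟨hy1, hy2⟩
      refine ⟨fun i => ?_, hy2⟩
      by_cases hi : i ∈ S
      · exact (hy1 i).1 hi
      · exact ((hy1 i).2 hi).le
    have hnull : volume ({y : Fin n → ℝ | (∀ i, 0 ≤ y i) ∧ ∑ i, y i ≤ 1} \ T) = 0 := by
      refine measure_mono_null (fun y hy => ?_) (measure_iUnion_null fun i : Fin n =>
        Measure.pi_hyperplane (fun _ => volume) i (0 : ℝ))
      obtain ⟨⟨hy1, hy2⟩, hyT⟩ := hy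
      have hex : ∃ i, ¬ ((i ∈ S → 0 ≤ y i) ∧ (i ∉ S → 0 < y i)) := by
        by_contra h
        push_neg at h
        exact hyT ⟨fun i => h i, hy2⟩
      obtain ⟨i, hi⟩ := hex
      have h2 : ¬ (i ∉ S → 0 < y i) := fun h => hi ⟨fun _ => hy1 i, h⟩
      push_neg at h2
      exact Set.mem_iUnion.mpr ⟨i, le_antisymm h2.2 (hy1 i)⟩
    refine le_antisymm (measure_mono hsub) ?_
    calc volume {y : Fin n → ℝ | (∀ i, 0 ≤ y i) ∧ ∑ i, y i ≤ 1}
        ≤ volume (T ∪ ({y : Fin n → ℝ | (∀ i, 0 ≤ y i) ∧ ∑ i, y i ≤ 1} \ T)) :=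
          measure_mono fun y hy => (em (y ∈ T)).imp id fun h => ⟨hy, h⟩
      _ ≤ volume T + volume ({y : Fin n → ℝ | (∀ i, 0 ≤ y i) ∧ ∑ i, y i ≤ 1} \ T) :=
          measure_union_le _ _
      _ = volume T := by rw [hnull, add_zero]
  rw [himg, Measure.addHaar_image_linearMap, hdet, habs, hTvol]

private lemma vol_body (n : ℕ) (l : Fin n → ℝ) (hl : ∀ i, 0 < l i) :
    volume {x : Fin n → ℝ | ∑ i, max (x i) (-(x i) / l i) ≤ 1} =
      ENNReal.ofReal (∏ i, (1 + l i)) *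
        volume {y : Fin n → ℝ | (∀ i, 0 ≤ y i) ∧ ∑ i, y i ≤ 1} := by
  classical
  set A := {x : Fin n → ℝ | ∑ i, max (x i) (-(x i) / l i) ≤ 1} with hA
  set P : Finset (Fin n) → Set (Fin n → ℝ) := fun S => {x | ∀ i, (i ∈ S ↔ 0 ≤ x i)} with hP
  have hAmeas : MeasurableSet A := by
    have hg : Continuous fun x : Fin n → ℝ => ∑ i, max (x i) (-(x i) / l i) :=
      continuous_finset_sum _ fun i _ =>
        (continuous_apply i).max (((continuous_apply i).neg).div_const _)
    exact measurableSet_le hg.measurable measurable_const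
  have hPmeas : ∀ S, MeasurableSet (P S) := by
    intro S
    have : P S = ⋂ i, {x : Fin n → ℝ | i ∈ S ↔ 0 ≤ x i} := by
      ext x; simp [hP, Set.mem_iInter]
    rw [this]
    refine MeasurableSet.iInter fun i => ?_
    by_cases hi : i ∈ S
    · simp only [hi, true_iff]
      exact measurableSet_le measurable_const (measurable_pi_apply i)
    · simp only [hi, false_iff]
      exact (measurableSet_le measurable_const (measurable_pi_apply i)).compl
  have hcover : A = ⋃ S : Finset (Fin n), (A ∩ P S) := by
    ext x
    simp only [Set.mem_iUnion, Set.mem_inter_iff]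
    constructor
    · intro hx
      exact ⟨Finset.univ.filter (fun i => 0 ≤ x i), hx, fun i => by simp [hP]⟩
    · rintro ⟨S, hx, -⟩; exact hx
  have hdisj : Pairwise (Function.onFun Disjoint fun S : Finset (Fin n) => A ∩ P S) := by
    intro S S' hSS'
    refine Set.disjoint_left.mpr ?_
    rintro x ⟨-, hx⟩ ⟨-, hx'⟩
    exact hSS' (Finset.ext fun i => (hx i).trans (hx' i).symm)
  rw [hcover, measure_iUnion hdisj fun S => hAmeas.inter (hPmeas S), tsum_fintype]
  have : ∀ S : Finset (Fin n), volume (A ∩ P S) =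
      ENNReal.ofReal (∏ i ∈ Sᶜ, l i) *
        volume {y : Fin n → ℝ | (∀ i, 0 ≤ y i) ∧ ∑ i, y i ≤ 1} :=
    fun S => vol_piece n l hl S
  rw [Finset.sum_congr rfl fun S _ => this S, ← Finset.sum_mul]
  congr 1
  rw [← ENNReal.ofReal_sum_of_nonneg fun S _ =>
    Finset.prod_nonneg fun i _ => (hl i).le]
  congr 1
  rw [Fintype.prod_add (fun _ => (1:ℝ)) l]
  exact Finset.sum_congr rfl fun S _ => by rw [Finset.prod_const_one, one_mul]

private lemma vol_corner (n : ℕ) :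
    volume {y : Fin n → ℝ | (∀ i, 0 ≤ y i) ∧ ∑ i, y i ≤ 1} =
      ENNReal.ofReal (1 / n.factorial) := by
  rcases Nat.eq_zero_or_pos n with hn | hn
  · subst hn
    have h : {y : Fin 0 → ℝ | (∀ i, 0 ≤ y i) ∧ ∑ i, y i ≤ 1} = Set.univ := by
      ext y
      simp only [Set.mem_setOf_eq, Set.mem_univ, iff_true]
      exact ⟨fun i => i.elim0, by simp⟩
    rw [h]
    simp [volume_pi, Measure.pi_univ]
  · haveI : Nonempty (Fin n) := ⟨⟨0, hn⟩⟩
    have h1 := MeasureTheory.volume_sum_rpow_le (Fin n) (le_refl (1:ℝ)) 1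
    have h2 := vol_body n (fun _ => 1) (fun _ => one_pos)
    norm_num [Real.rpow_one, abs_eq_max_neg, Real.Gamma_two,
      Real.Gamma_nat_eq_factorial, Fintype.card_fin] at h1
    norm_num [Finset.prod_const, Fintype.card_fin] at h2
    rw [h1] at h2
    have hfac : (0:ℝ) < n.factorial := by positivity
    have h3 : ENNReal.ofReal ((2:ℝ) ^ n / n.factorial) =
        ENNReal.ofReal ((2:ℝ) ^ n) * ENNReal.ofReal (1 / n.factorial) := by
      rw [← ENNReal.ofReal_mul (by positivity)]
      congr 1
      field_simp
    rw [h3] at h2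
    have hne : ENNReal.ofReal ((2:ℝ) ^ n) ≠ 0 := by positivity
    exact ((ENNReal.mul_right_inj hne ENNReal.ofReal_ne_top).mp
      (by rw [ENNReal.ofReal_pow (by norm_num), ENNReal.ofReal_ofNat] at h2 ⊢; exact h2.symm))

theorem volume_convexHull_simplex_scaled_simplex (n : ℕ) (l : Fin n → ℝ)
    (hl : ∀ i, 0 < l i)
    (K L : Set (EuclideanSpace ℝ (Fin n)))
    (hK : K = convexHull ℝ (insert (0 : EuclideanSpace ℝ (Fin n))
      (Set.range fun i => EuclideanSpace.single i (1 : ℝ))))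
    (hL : L = convexHull ℝ (insert (0 : EuclideanSpace ℝ (Fin n))
      (Set.range fun i => EuclideanSpace.single i (l i)))) :
    volume (convexHull ℝ (K ∪ -L)) =
      ENNReal.ofReal ((∏ i, (1 + l i)) / n.factorial) := by
  classical
  subst hK hL
  set A : Set (EuclideanSpace ℝ (Fin n)) :=
    {x | ∑ i, max (x i) (-(x i) / l i) ≤ 1} with hAdef
  have hsingle : ∀ (j : Fin n) (c : ℝ),
      ∑ i, max ((EuclideanSpace.single j c : EuclideanSpace ℝ (Fin n)) i)
        (-((EuclideanSpace.single j c : EuclideanSpace ℝ (Fin n)) i) / l i)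
        = max c (-c / l j) := by
    intro j c
    rw [Finset.sum_eq_single_of_mem j (Finset.mem_univ j)]
    · rw [EuclideanSpace.single_apply, if_pos rfl]
    · intro b _ hb
      rw [EuclideanSpace.single_apply, if_neg hb]
      simp
  have hAconv : Convex ℝ A := by
    intro x hx y hy a b ha hb hab
    simp only [hAdef, Set.mem_setOf_eq] at hx hy ⊢
    have step : ∀ i : Fin n, max ((a • x + b • y) i) (-((a • x + b • y) i) / l i) ≤
        a * max (x i) (-(x i) / l i) + b * max (y i) (-(y i) / l i) := by
      intro i
      have hcoord : (a • x + b • y) i = a * x i + b * y i := rfl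
      rw [hcoord]
      have hx1 := le_max_left (x i) (-(x i) / l i)
      have hx2 := le_max_right (x i) (-(x i) / l i)
      have hy1 := le_max_left (y i) (-(y i) / l i)
      have hy2 := le_max_right (y i) (-(y i) / l i)
      apply max_le
      · exact add_le_add (mul_le_mul_of_nonneg_left hx1 ha)
          (mul_le_mul_of_nonneg_left hy1 hb)
      · have hrw : -(a * x i + b * y i) / l i =
            a * (-(x i) / l i) + b * (-(y i) / l i) := by
          field_simp
          ring
        rw [hrw]
        exact add_le_add (mul_le_mul_of_nonneg_left hx2 ha)
          (mul_le_mul_of_nonneg_left hy2 hb)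
    calc ∑ i, max ((a • x + b • y) i) (-((a • x + b • y) i) / l i)
        ≤ ∑ i, (a * max (x i) (-(x i) / l i) + b * max (y i) (-(y i) / l i)) :=
          Finset.sum_le_sum fun i _ => step i
      _ = a * (∑ i, max (x i) (-(x i) / l i)) + b * (∑ i, max (y i) (-(y i) / l i)) := by
          rw [Finset.sum_add_distrib, Finset.mul_sum, Finset.mul_sum]
      _ ≤ a * 1 + b * 1 := add_le_add (mul_le_mul_of_nonneg_left hx ha)
          (mul_le_mul_of_nonneg_left hy hb)
      _ = 1 := by rw [mul_one, mul_one, hab]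
  have hzero : (0 : EuclideanSpace ℝ (Fin n)) ∈ A := by
    have h0 : ∀ i : Fin n, max ((0 : EuclideanSpace ℝ (Fin n)) i)
        (-((0 : EuclideanSpace ℝ (Fin n)) i) / l i) = 0 := by
      intro i
      show max (0:ℝ) (-(0:ℝ) / l i) = 0
      simp
    simp only [hAdef, Set.mem_setOf_eq]
    rw [Finset.sum_congr rfl fun i _ => h0 i]
    simp
  have hull_eq : convexHull ℝ
      ((convexHull ℝ (insert (0 : EuclideanSpace ℝ (Fin n))
        (Set.range fun i => EuclideanSpace.single i (1 : ℝ)))) ∪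
       -(convexHull ℝ (insert (0 : EuclideanSpace ℝ (Fin n))
        (Set.range fun i => EuclideanSpace.single i (l i))))) = A := by
    have hnegsingle : ∀ (j : Fin n) (c : ℝ),
        -(EuclideanSpace.single j c : EuclideanSpace ℝ (Fin n)) =
          EuclideanSpace.single j (-c) := by
      intro j c
      ext j'
      show -(EuclideanSpace.single j c : EuclideanSpace ℝ (Fin n)) j' = _
      rw [EuclideanSpace.single_apply, EuclideanSpace.single_apply]
      by_cases h : j' = j <;> simp [h]
    have hneg : -(convexHull ℝ (insert (0 : EuclideanSpace ℝ (Fin n))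
        (Set.range fun i => EuclideanSpace.single i (l i)))) =
        convexHull ℝ (insert (0 : EuclideanSpace ℝ (Fin n))
          (Set.range fun i => EuclideanSpace.single i (-l i))) := by
      rw [← convexHull_neg]
      congr 1
      ext x
      simp only [Set.mem_neg, Set.mem_insert_iff, Set.mem_range, neg_eq_zero]
      constructor
      · rintro (h | ⟨i, hi⟩)
        · exact Or.inl h
        · refine Or.inr ⟨i, ?_⟩
          rw [← hnegsingle, hi, neg_neg]
      · rintro (h | ⟨i, hi⟩)
        · exact Or.inl h
        · refine Or.inr ⟨i, ?_⟩
          rw [← neg_eq_iff_eq_neg, ← hi, hnegsingle]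
    rw [hneg, convexHull_convexHull_union_left, convexHull_convexHull_union_right]
    apply le_antisymm
    · apply convexHull_min _ hAconv
      rintro x hx
      simp only [Set.mem_union, Set.mem_insert_iff, Set.mem_range] at hx
      rcases hx with (rfl | ⟨i, rfl⟩) | (rfl | ⟨i, rfl⟩)
      · exact hzero
      · simp only [hAdef, Set.mem_setOf_eq]
        rw [hsingle]
        have : -(1:ℝ) / l i ≤ 1 :=
          le_trans (div_nonpos_of_nonpos_of_nonneg (by norm_num) (hl i).le) zero_le_one
        rw [max_eq_left this]
      · exact hzero
      · simp only [hAdef, Set.mem_setOf_eq]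
        rw [hsingle]
        have h1 : -(-l i) / l i = 1 := by
          rw [neg_neg]; exact div_self (hl i).ne'
        rw [h1, max_eq_right (by linarith [hl i])]
    · intro x hx
      simp only [hAdef, Set.mem_setOf_eq] at hx
      set m : Fin n → ℝ := fun i => max (x i) (-(x i) / l i) with hm
      have hm0 : ∀ i, 0 ≤ m i := by
        intro i
        rcases le_or_gt 0 (x i) with h | h
        · exact le_trans h (le_max_left _ _)
        · exact le_trans (div_nonneg (neg_nonneg.mpr h.le) (hl i).le) (le_max_right _ _)
      set w : Option (Fin n) → ℝ := fun o => o.elim (1 - ∑ i, m i) m with hw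
      set z : Option (Fin n) → EuclideanSpace ℝ (Fin n) := fun o =>
        o.elim 0 (fun i => if 0 ≤ x i then EuclideanSpace.single i (1:ℝ)
          else EuclideanSpace.single i (-l i)) with hz
      have hw0 : ∀ o : Option (Fin n), 0 ≤ w o := by
        rintro (_ | i)
        · simpa [hw] using sub_nonneg.mpr hx
        · exact hm0 i
      have hwsum : ∑ o : Option (Fin n), w o = 1 := by
        rw [Fintype.sum_option]
        simp [hw]
      have hzmem : ∀ o : Option (Fin n), z o ∈
          (insert (0 : EuclideanSpace ℝ (Fin n))
            (Set.range fun i => EuclideanSpace.single i (1 : ℝ)) ∪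
           insert (0 : EuclideanSpace ℝ (Fin n))
            (Set.range fun i => EuclideanSpace.single i (-l i))) := by
        rintro (_ | i)
        · exact Or.inl (Set.mem_insert _ _)
        · by_cases h : 0 ≤ x i
          · exact Or.inl (Set.mem_insert_iff.mpr (Or.inr ⟨i, by simp [hz, h]⟩))
          · exact Or.inr (Set.mem_insert_iff.mpr (Or.inr ⟨i, by simp [hz, h]⟩))
      have hxeq : x = Finset.univ.centerMass w z := by
        rw [Finset.centerMass_eq_of_sum_1 _ _ hwsum]
        ext j
        have happ : (∑ o : Option (Fin n), w o • z o) j = ∑ o : Option (Fin n), w o * z o j := by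
          rw [WithLp.ofLp_sum, Finset.sum_apply]
          rfl
        rw [happ, Fintype.sum_option]
        have hnone : w none * z none j = 0 := by simp [hz]
        rw [hnone, zero_add]
        rw [Finset.sum_eq_single_of_mem j (Finset.mem_univ j)]
        · by_cases h : 0 ≤ x j
          · have hz1 : z (some j) j = 1 := by
              simp [hz, h, EuclideanSpace.single_apply]
            have hmj : m j = x j := by
              rw [hm]
              exact (max_eq_left (le_trans
                (div_nonpos_of_nonpos_of_nonneg (neg_nonpos.mpr h) (hl j).le) h)).symm ▸ rfl
            rw [hz1, mul_one]
            show x j = m j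
            exact hmj.symm
          · have hz1 : z (some j) j = -l j := by
              simp [hz, h, EuclideanSpace.single_apply]
            have hmj : m j = -(x j) / l j := by
              rw [hm]
              have hxj : x j < 0 := lt_of_not_ge h
              exact max_eq_right (le_trans hxj.le
                (div_nonneg (neg_nonneg.mpr hxj.le) (hl j).le))
            rw [hz1]
            show x j = m j * (-l j)
            rw [hmj, neg_div, neg_mul_neg, div_mul_cancel₀ _ (hl j).ne']
        · intro b _ hb
          have : z (some b) j = 0 := by
            by_cases h : 0 ≤ x b <;>
              simp [hz, h, EuclideanSpace.single_apply, hb.symm]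
          rw [this, mul_zero]
      rw [hxeq]
      exact Finset.centerMass_mem_convexHull _ (fun o _ => hw0 o)
        (by rw [hwsum]; exact one_pos) (fun o _ => hzmem o)
  rw [hull_eq]
  -- transfer to pi space
  have hApi_meas : NullMeasurableSet
      {x : Fin n → ℝ | ∑ i, max (x i) (-(x i) / l i) ≤ 1} volume := by
    have hg : Continuous fun x : Fin n → ℝ => ∑ i, max (x i) (-(x i) / l i) :=
      continuous_finset_sum _ fun i _ =>
        (continuous_apply i).max (((continuous_apply i).neg).div_const _)
    exact (measurableSet_le hg.measurable measurable_const).nullMeasurableSet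
  have htrans := (EuclideanSpace.volume_preserving_symm_measurableEquiv_toLp (Fin n)).measure_preimage
    hApi_meas
  have hpre : (MeasurableEquiv.toLp 2 (Fin n → ℝ)).symm ⁻¹'
      {x : Fin n → ℝ | ∑ i, max (x i) (-(x i) / l i) ≤ 1} = A := rfl
  rw [hpre] at htrans
  rw [htrans, vol_body n l hl, vol_corner n, ← ENNReal.ofReal_mul
    (Finset.prod_nonneg fun i _ => by linarith [hl i])]
  congr 1
  rw [mul_one_div]
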